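/- Let {g_k}_{k≥0} be a sequence in ℝ^n, ς > 0, and μ ∈ (0, 1/2). With w_{k,j} = (ς + Σ_{t=0}^k g_{t,j}²)^μ, for every i ≥ 0 and every j, Σ_{k=0}^i g_{k,j}² / w_{k,j}² ≤ (1/(1−2μ)) (ς + Σ_{k=0}^i g_{k,j}²)^{1−2μ}. -/

import Mathlib

open Real

lemma key_aux {b c α : ℝ} (hb : 0 < b) (hbc : b ≤ c) (hα0 : 0 < α) (hα1 : α ≤ 1) :
    (c - b) / c ^ (1 - α) ≤ (c ^ α - b ^ α) / α := by
  have hc : 0 < c := hb.trans_le hbc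
  have hbern := rpow_one_add_le_one_add_mul_self (s := b / c - 1)
    (by have h0 : 0 ≤ b / c := div_nonneg hb.le hc.le; linarith) hα0.le hα1
  rw [add_sub_cancel, div_rpow hb.le hc.le] at hbern
  have hXpos : (0:ℝ) < c ^ α := rpow_pos_of_pos hc α
  have hCpos : (0:ℝ) < c ^ (1 - α) := rpow_pos_of_pos hc _
  have hXC : c ^ α * c ^ (1 - α) = c := by
    rw [← rpow_add hc]; simp
  have h := mul_le_mul_of_nonneg_right hbern hXpos.le
  rw [div_mul_cancel₀ _ hXpos.ne'] at h
  have hBle : c * b ^ α ≤ c * c ^ α + α * (b - c) * c ^ α := by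
    have h' := mul_le_mul_of_nonneg_left h hc.le
    have he : c * ((1 + α * (b / c - 1)) * c ^ α) = c * c ^ α + α * (b - c) * c ^ α := by
      field_simp
    linarith [he.le, he.ge]
  rw [div_le_div_iff₀ hCpos hα0]
  have h3 : (c - b) * α * c ^ α ≤ (c ^ α - b ^ α) * c := by nlinarith
  rw [← mul_le_mul_iff_of_pos_right hXpos]
  have h4 : (c ^ α - b ^ α) * c ^ (1 - α) * c ^ α = (c ^ α - b ^ α) * c := by
    rw [mul_assoc, mul_comm (c ^ (1 - α)), hXC]
  rw [h4]
  exact h3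

theorem stmt_10 {n : ℕ} (g : ℕ → Fin n → ℝ) (ς μ : ℝ) (hς : 0 < ς)
    (hμ : μ ∈ Set.Ioo (0 : ℝ) (1 / 2))
    (w : ℕ → Fin n → ℝ)
    (hw : ∀ k j, w k j = (ς + ∑ t ∈ Finset.range (k + 1), (g t j) ^ 2) ^ μ)
    (i : ℕ) (j : Fin n) :
    ∑ k ∈ Finset.range (i + 1), (g k j) ^ 2 / (w k j) ^ 2 ≤
      (1 / (1 - 2 * μ)) * (ς + ∑ k ∈ Finset.range (i + 1), (g k j) ^ 2) ^ (1 - 2 * μ) := by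
  obtain ⟨hμ0, hμ2⟩ := hμ
  set α : ℝ := 1 - 2 * μ with hα
  have hα0 : 0 < α := by simp only [hα]; linarith
  have hα1 : α ≤ 1 := by simp only [hα]; linarith
  set S : ℕ → ℝ := fun k => ς + ∑ t ∈ Finset.range (k + 1), (g t j) ^ 2 with hS
  have hSsum : ∀ k, 0 ≤ ∑ t ∈ Finset.range (k + 1), (g t j) ^ 2 :=
    fun k => Finset.sum_nonneg fun t _ => sq_nonneg _
  have hSpos : ∀ k, 0 < S k := by
    intro k
    have := hSsum k
    simp only [hS]; linarith
  have hw2 : ∀ k, (w k j) ^ 2 = (S k) ^ (1 - α) := by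
    intro k
    have h2μ : (1 : ℝ) - α = 2 * μ := by simp [hα]
    rw [hw k j, h2μ, ← rpow_natCast ((S k) ^ μ) 2, ← rpow_mul (hSpos k).le]
    norm_num [mul_comm]
  have main : ∀ m : ℕ, ∑ k ∈ Finset.range (m + 1), (g k j) ^ 2 / (w k j) ^ 2 ≤
      ((S m) ^ α - ς ^ α) / α := by
    intro m
    induction m with
    | zero =>
      rw [Finset.sum_range_one, hw2 0]
      have hle : ς ≤ S 0 := by
        have := hSsum 0; simp only [hS]; linarith
      have hkey := key_aux hς hle hα0 hα1
      have hcb : S 0 - ς = (g 0 j) ^ 2 := by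
        simp [hS, Finset.sum_range_one]
      rwa [hcb] at hkey
    | succ m ih =>
      rw [Finset.sum_range_succ]
      have hle : S m ≤ S (m + 1) := by
        have : ∑ t ∈ Finset.range (m + 1), (g t j) ^ 2 ≤
            ∑ t ∈ Finset.range (m + 1 + 1), (g t j) ^ 2 :=
          Finset.sum_le_sum_of_subset_of_nonneg
            (Finset.range_subset_range.mpr (by omega)) (fun t _ _ => sq_nonneg _)
        simp only [hS]; linarith
      have hkey := key_aux (hSpos m) hle hα0 hα1
      have hcb : S (m + 1) - S m = (g (m + 1) j) ^ 2 := by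
        simp only [hS]; rw [Finset.sum_range_succ]; ring
      rw [hcb] at hkey
      rw [hw2 (m + 1)]
      have heq : (S m ^ α - ς ^ α) / α + (S (m+1) ^ α - S m ^ α) / α =
          (S (m+1) ^ α - ς ^ α) / α := by ring
      linarith
  have h := main i
  have hςα : 0 ≤ ς ^ α := (rpow_pos_of_pos hς α).le
  have h5 : 0 ≤ ς ^ α / α := div_nonneg hςα hα0.le
  have e : (1/α) * (S i) ^ α = (S i) ^ α / α := by ring
  have hsd : ((S i) ^ α - ς ^ α) / α = (S i) ^ α / α - ς ^ α / α := sub_div _ _ _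
  calc ∑ k ∈ Finset.range (i + 1), (g k j) ^ 2 / (w k j) ^ 2
      ≤ ((S i) ^ α - ς ^ α) / α := h
    _ ≤ (1 / α) * (S i) ^ α := by linarith
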